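/- Let Σ₀ and Σ₁ be p×p complex Hermitian positive definite matrices and define γ(t) = Σ₀^{1/2} exp(t log(Σ₀^{-1/2} Σ₁ Σ₀^{-1/2})) Σ₀^{1/2}. Then for all real t, det γ(t) = (det Σ₀)^{1-t} · (det Σ₁)^t. In particular, if det Σ₀ = det Σ₁ = 1, then det γ(t) = 1 for all t. -/

import Mathlib

open Matrix
open scoped ComplexOrder

lemma aux_posdef_conj {p : ℕ} {A B : Matrix (Fin p) (Fin p) ℂ}
    (hA : A.PosDef) (hB : B.IsHermitian) (hBu : IsUnit B.det) :
    (B * A * B).PosDef := by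
  refine PosDef.of_dotProduct_mulVec_pos ?_ fun x hx => ?_
  · have : (B * A * B)ᴴ = Bᴴ * Aᴴ * Bᴴ := by
      rw [conjTranspose_mul, conjTranspose_mul, mul_assoc]
    rw [IsHermitian, this, hA.1, hB]
  · have hBx : B *ᵥ x ≠ 0 := by
      intro h
      exact hx (Matrix.eq_zero_of_mulVec_eq_zero hBu.ne_zero h)
    have h2 := hA.dotProduct_mulVec_pos hBx
    have : star x ⬝ᵥ (B * A * B) *ᵥ x = star (B *ᵥ x) ⬝ᵥ A *ᵥ (B *ᵥ x) := by
      rw [star_mulVec, ← Matrix.dotProduct_mulVec, hB.eq]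
      rw [mulVec_mulVec, mulVec_mulVec]
    rw [this]; exact h2

lemma aux_det_exp {p : ℕ} (M : Matrix (Fin p) (Fin p) ℂ) (hM : M.PosDef) (t : ℝ) :
    (NormedSpace.exp ((t : ℂ) • cfc Real.log M)).det
      = (((∏ i, hM.1.eigenvalues i) ^ t : ℝ) : ℂ) := by
  have hMh : M.IsHermitian := hM.1
  set ev := hMh.eigenvalues with hev
  have hevpos : ∀ i, 0 < ev i := hM.eigenvalues_pos
  rw [hMh.cfc_eq]
  rw [Matrix.IsHermitian.cfc, Unitary.conjStarAlgAut_apply]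
  set u := Unitary.toUnits hMh.eigenvectorUnitary with hu
  have hcoe : (↑u : Matrix (Fin p) (Fin p) ℂ) = hMh.eigenvectorUnitary := rfl
  have hcoeinv : (↑u⁻¹ : Matrix (Fin p) (Fin p) ℂ)
      = star (hMh.eigenvectorUnitary : Matrix (Fin p) (Fin p) ℂ) := rfl
  set d : Fin p → ℂ := fun i => (t : ℂ) * Real.log (ev i) with hd
  have hsmul : (t : ℂ) • ((hMh.eigenvectorUnitary : Matrix (Fin p) (Fin p) ℂ) *
        diagonal (RCLike.ofReal ∘ Real.log ∘ ev) *
          star (hMh.eigenvectorUnitary : Matrix (Fin p) (Fin p) ℂ))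
      = (u : Matrix (Fin p) (Fin p) ℂ) * diagonal d * (↑u⁻¹ : Matrix (Fin p) (Fin p) ℂ) := by
    rw [hcoe, hcoeinv]
    have hD : diagonal d = (t:ℂ) • diagonal (RCLike.ofReal ∘ Real.log ∘ ev) := by
      rw [← Matrix.diagonal_smul]
      congr 1
    rw [hD, mul_smul_comm, smul_mul_assoc]
  rw [hsmul, Matrix.exp_units_conj, Matrix.exp_diagonal]
  rw [det_mul, det_mul, det_diagonal]
  have hdu : (↑u : Matrix (Fin p) (Fin p) ℂ).det * (↑u⁻¹ : Matrix (Fin p) (Fin p) ℂ).det = 1 := by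
    rw [← det_mul, ← Units.val_mul, mul_inv_cancel, Units.val_one, det_one]
  have hexp : ∀ i, NormedSpace.exp d i = ((ev i ^ t : ℝ) : ℂ) := by
    intro i
    rw [Pi.exp_def]
    show NormedSpace.exp (d i) = _
    rw [← Complex.exp_eq_exp_ℂ]
    have : d i = ((t * Real.log (ev i) : ℝ) : ℂ) := by push_cast [hd]; ring
    rw [this, ← Complex.ofReal_exp]
    congr 1
    rw [Real.rpow_def_of_pos (hevpos i), mul_comm]
  calc (↑u : Matrix (Fin p) (Fin p) ℂ).det * (∏ i, NormedSpace.exp d i)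
        * (↑u⁻¹ : Matrix (Fin p) (Fin p) ℂ).det
      = ((↑u : Matrix (Fin p) (Fin p) ℂ).det * (↑u⁻¹ : Matrix (Fin p) (Fin p) ℂ).det)
        * ∏ i, NormedSpace.exp d i := by ring
    _ = ∏ i, NormedSpace.exp d i := by rw [hdu, one_mul]
    _ = ∏ i, ((ev i ^ t : ℝ) : ℂ) := by simp_rw [hexp]
    _ = (((∏ i, ev i) ^ t : ℝ) : ℂ) := by
        rw [← Complex.ofReal_prod, Real.finset_prod_rpow _ _ (fun i _ => (hevpos i).le)]

/-- Along the affine-invariant geodesic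
`γ(t) = Σ₀^{1/2} exp(t log(Σ₀^{-1/2} Σ₁ Σ₀^{-1/2})) Σ₀^{1/2}` joining two Hermitian positive
definite matrices `Σ₀, Σ₁`, the determinant interpolates geometrically:
`det γ(t) = (det Σ₀)^{1-t} (det Σ₁)^t` (the determinants being positive reals, the real
powers are well defined). In particular, if `det Σ₀ = det Σ₁ = 1` then `det γ(t) = 1` for all
`t`, i.e. `SH⁺⁺_p` is geodesically closed. -/
theorem geodesic_det_interpolation
    {p : ℕ} (S0 S1 : Matrix (Fin p) (Fin p) ℂ)
    (hS0 : S0.PosDef) (hS1 : S1.PosDef)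
    (γ : ℝ → Matrix (Fin p) (Fin p) ℂ)
    (hγ : γ = fun t : ℝ =>
      cfc Real.sqrt S0 *
        NormedSpace.exp
          ((t : ℂ) • cfc Real.log (cfc Real.sqrt S0⁻¹ * S1 * cfc Real.sqrt S0⁻¹)) *
        cfc Real.sqrt S0) :
    (∀ t : ℝ, (γ t).det = ((S0.det.re ^ (1 - t) * S1.det.re ^ t : ℝ) : ℂ)) ∧
      (S0.det = 1 → S1.det = 1 → ∀ t : ℝ, (γ t).det = 1) := by
  set Q := cfc Real.sqrt S0 with hQ
  open scoped MatrixOrder in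
  have hsq : ∀ A : Matrix (Fin p) (Fin p) ℂ, A.PosSemidef → cfc Real.sqrt A = CFC.sqrt A := by
    intro A hA
    rw [CFC.sqrt_eq_real_sqrt A hA.nonneg, cfcₙ_eq_cfc]
  have hQinv : cfc Real.sqrt S0⁻¹ = Q⁻¹ := by
    open scoped MatrixOrder in
    rw [hQ, hsq _ hS0.posSemidef, hsq _ hS0.posSemidef.inv, hS0.posSemidef.inv_sqrt]
  rw [hQinv] at hγ
  have hQh : Q.IsHermitian := isHermitian_iff_isSelfAdjoint.mpr IsSelfAdjoint.cfc
  have hQQ : Q * Q = S0 := by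
    rw [hQ, hsq _ hS0.posSemidef]
    open scoped MatrixOrder in exact CFC.sqrt_mul_sqrt_self S0 hS0.posSemidef.nonneg
  have hdetQ : Q.det * Q.det = S0.det := by rw [← det_mul, hQQ]
  have h0pos : (0 : ℂ) < S0.det := hS0.det_pos
  have h1pos : (0 : ℂ) < S1.det := hS1.det_pos
  set s0 := S0.det.re with hs0
  set s1 := S1.det.re with hs1
  have hs0pos : 0 < s0 := by
    have := (Complex.lt_def.mp h0pos).1; simpa using this
  have hs1pos : 0 < s1 := by
    have := (Complex.lt_def.mp h1pos).1; simpa using this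
  have hS0eq : S0.det = (s0 : ℂ) := by
    apply Complex.ext <;> simp [(Complex.lt_def.mp h0pos).2.symm, hs0]
  have hS1eq : S1.det = (s1 : ℂ) := by
    apply Complex.ext <;> simp [(Complex.lt_def.mp h1pos).2.symm, hs1]
  have hdetQ0 : Q.det ≠ 0 := by
    intro h
    rw [h, mul_zero] at hdetQ
    exact hs0pos.ne' (by rw [hs0, ← hdetQ]; simp)
  have hQih : Q⁻¹.IsHermitian := hQh.inv
  have hQidet : IsUnit Q⁻¹.det := by
    rw [Matrix.det_nonsing_inv]
    simp [Ring.inverse_eq_inv', hdetQ0]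
  set M := Q⁻¹ * S1 * Q⁻¹ with hMdef
  have hM : M.PosDef := aux_posdef_conj hS1 hQih hQidet
  -- determinant of M
  have hQQs : Q.det * Q.det = (s0 : ℂ) := by rw [hdetQ, hS0eq]
  have hMdet : M.det = ((s1 / s0 : ℝ) : ℂ) := by
    rw [hMdef, det_mul, det_mul, Matrix.det_nonsing_inv, Ring.inverse_eq_inv']
    rw [hS1eq, Complex.ofReal_div]
    have hs0ne : (s0 : ℂ) ≠ 0 := by exact_mod_cast hs0pos.ne'
    rw [eq_div_iff hs0ne, ← hQQs]
    field_simp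
  set m := ∏ i, hM.1.eigenvalues i with hm
  have hmdet : (m : ℂ) = M.det := by
    rw [hM.1.det_eq_prod_eigenvalues, Complex.ofReal_prod]
    rfl
  have hmeq : m = s1 / s0 := by
    have : (m : ℂ) = ((s1 / s0 : ℝ) : ℂ) := by rw [hmdet, hMdet]
    exact_mod_cast this
  have hmain : ∀ t : ℝ, (γ t).det = ((s0 ^ (1 - t) * s1 ^ t : ℝ) : ℂ) := by
    intro t
    rw [hγ]
    simp only
    rw [det_mul, det_mul, aux_det_exp M hM t, ← hm, hmeq]
    have hreal : s0 * ((s1 / s0) ^ t) = s0 ^ (1 - t) * s1 ^ t := by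
      rw [Real.div_rpow hs1pos.le hs0pos.le, Real.rpow_sub hs0pos, Real.rpow_one]
      have : (s0:ℝ) ^ t ≠ 0 := (Real.rpow_pos_of_pos hs0pos t).ne'
      field_simp
    calc Q.det * ((((s1 / s0) ^ t : ℝ)) : ℂ) * Q.det
        = (Q.det * Q.det) * (((s1 / s0) ^ t : ℝ) : ℂ) := by ring
      _ = (s0 : ℂ) * (((s1 / s0) ^ t : ℝ) : ℂ) := by rw [hdetQ, hS0eq]
      _ = ((s0 * ((s1 / s0) ^ t) : ℝ) : ℂ) := by push_cast; ring
      _ = ((s0 ^ (1 - t) * s1 ^ t : ℝ) : ℂ) := by rw [hreal]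
  refine ⟨hmain, fun h0 h1 t => ?_⟩
  have hs0one : s0 = 1 := by rw [hs0, h0]; simp
  have hs1one : s1 = 1 := by rw [hs1, h1]; simp
  rw [hmain t, hs0one, hs1one]
  simp
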